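/- The state μ₀ on A₋₁,₀ is multiplicative with respect to convolution: μ₀(a * b) = μ₀(a) μ₀(b) for all a, b ∈ A₋₁,₀, where μ₀(a)·1 = w₋₁* a w₋₁ and a * b = w₋₁* a γ(b) w₋₁. -/
import Mathlib


/-- The state `μ₀` on `A₋₁,₀` is multiplicative with respect to
convolution: `μ₀(a * b) = μ₀(a) μ₀(b)`, where `μ₀(a)·1 = w₋₁* a w₋₁` and
`a * b = w₋₁* a γ(b) w₋₁`.  (`wm1 = w₋₁`, `wm3 = w₋₃ = γ(w₋₁)`, with the
intertwining relation `w₋₁ w₋₁ = w₋₃ w₋₁`.) -/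
theorem mu_zero_multiplicative_on_convolution
    {B : Type*} [Ring B] [StarRing B] [Algebra ℂ B] [StarModule ℂ B]
    (M N : StarSubalgebra ℂ B) (hNM : N ≤ M)
    (γ : B →⋆ₐ[ℂ] B) (hγM : ∀ m ∈ M, γ m ∈ N)
    (wm1 : B) (hwN : wm1 ∈ N) (hiso : star wm1 * wm1 = 1)
    (hintN : ∀ n ∈ N, wm1 * n = γ n * wm1)
    (hww : wm1 * wm1 = γ wm1 * wm1) :
    ∀ a ∈ M, (∀ m ∈ M, a * γ m = γ m * a) →
      ∀ b ∈ M, (∀ m ∈ M, b * γ m = γ m * b) →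
        ∀ ca cb : ℂ, star wm1 * a * wm1 = ca • (1 : B) →
          star wm1 * b * wm1 = cb • (1 : B) →
            star wm1 * (star wm1 * a * γ b * wm1) * wm1 = (ca * cb) • (1 : B) := by
  intro a haM hacomm b hbM hbcomm ca cb hca hcb
  have hswM : star wm1 ∈ M := hNM (star_mem hwN)
  have h1 : star wm1 * star wm1 = star wm1 * γ (star wm1) := by
    have := congrArg star hww
    simpa [star_mul, map_star] using this
  have hacomm' : γ (star wm1) * a = a * γ (star wm1) := (hacomm _ hswM).symm
  calc star wm1 * (star wm1 * a * γ b * wm1) * wm1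
      = (star wm1 * star wm1) * (a * (γ b * (wm1 * wm1))) := by
        simp only [mul_assoc]
    _ = (star wm1 * γ (star wm1)) * (a * (γ b * (γ wm1 * wm1))) := by rw [h1, hww]
    _ = star wm1 * (γ (star wm1) * a) * (γ b * γ wm1 * wm1) := by
        simp only [mul_assoc]
    _ = star wm1 * (a * γ (star wm1)) * (γ b * γ wm1 * wm1) := by rw [hacomm']
    _ = star wm1 * a * (γ (star wm1) * γ b * γ wm1) * wm1 := by
        simp only [mul_assoc]
    _ = star wm1 * a * γ (star wm1 * b * wm1) * wm1 := by
        simp only [map_mul]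
    _ = star wm1 * a * (cb • (1 : B)) * wm1 := by rw [hcb, map_smul, map_one]
    _ = cb • (star wm1 * a * wm1) := by
        simp [mul_smul_comm, smul_mul_assoc]
    _ = (ca * cb) • (1 : B) := by rw [hca, smul_smul, mul_comm]
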